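/- arXiv:2511.04446 — 2 statements merged into one kernel-verified Lean document; each statement's English description precedes it below -/
import Mathlib

section
/- Every POVM whose effects all commute pairwise and are simultaneously diagonal in some orthonormal basis is projectively simulable. -/
open Matrix BigOperators ComplexOrder

noncomputable section

/-- A POVM: positive semidefinite effects summing to the identity. -/
def IsPOVM (d n : ℕ) (M : Fin n → Matrix (Fin d) (Fin d) ℂ) : Prop :=
  (∀ i, (M i).PosSemidef) ∧ ∑ i, M i = 1

/-- A projective measurement. -/
def IsProjMeas (d n : ℕ) (P : Fin n → Matrix (Fin d) (Fin d) ℂ) : Prop :=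
  (∀ i, (P i)ᴴ = P i) ∧
  (∀ i j, P i * P j = if i = j then P i else 0) ∧
  ∑ i, P i = 1

/-- Projective simulability. -/
def Simulable (d n : ℕ) (M : Fin n → Matrix (Fin d) (Fin d) ℂ) : Prop :=
  ∃ (N : ℕ) (p : Fin N → ℝ) (P : Fin N → Fin n → Matrix (Fin d) (Fin d) ℂ),
    (∀ k, 0 ≤ p k) ∧ (∑ k, p k = 1) ∧ (∀ k, IsProjMeas d n (P k)) ∧
    (∀ i, M i = ∑ k, (p k : ℂ) • P k i)

/-- Every POVM whose effects commute pairwise and are simultaneously diagonal in some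
orthonormal basis is projectively simulable. -/
theorem commuting_diagonal_povm_simulable (d n : ℕ)
    (M : Fin n → Matrix (Fin d) (Fin d) ℂ) (hM : IsPOVM d n M)
    (hcomm : ∀ i j, M i * M j = M j * M i)
    (hdiag : ∃ U : Matrix (Fin d) (Fin d) ℂ, U ∈ Matrix.unitaryGroup (Fin d) ℂ ∧
      ∀ i, ∃ c : Fin d → ℂ, M i = U * Matrix.diagonal c * Uᴴ) :
    Simulable d n M := by
  obtain ⟨hpos, hsum⟩ := hM
  obtain ⟨U, hU, hdiag⟩ := hdiag
  choose c hc using hdiag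
  have hUU : Uᴴ * U = 1 := by
    simpa [Matrix.star_eq_conjTranspose] using (Matrix.mem_unitaryGroup_iff'.mp hU)
  have hUU' : U * Uᴴ = 1 := by
    simpa [Matrix.star_eq_conjTranspose] using (Matrix.mem_unitaryGroup_iff.mp hU)
  have hsand : ∀ D : Matrix (Fin d) (Fin d) ℂ, Uᴴ * (U * D * Uᴴ) * U = D := by
    intro D
    calc Uᴴ * (U * D * Uᴴ) * U = (Uᴴ * U) * D * (Uᴴ * U) := by noncomm_ring
      _ = D := by rw [hUU]; simp
  -- each eigenvalue is nonneg
  have hcpos : ∀ i x, 0 ≤ c i x := by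
    intro i x
    have h1 : (Uᴴ * M i * U).PosSemidef := by
      simpa using (hpos i).mul_mul_conjTranspose_same Uᴴ
    have h2 : (Matrix.diagonal (c i)).PosSemidef := by
      rw [hc i] at h1; simpa [hsand] using h1
    exact Matrix.posSemidef_diagonal_iff.mp h2 x
  -- eigenvalues sum to one, columnwise
  have hdsum : ∀ (g : Fin n → Fin d → ℂ), ∑ i, Matrix.diagonal (g i)
      = Matrix.diagonal (fun x => ∑ i, g i x) := by
    intro g
    ext a b
    by_cases hab : a = b <;> simp [Matrix.sum_apply, Matrix.diagonal_apply, hab]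
  have hcsum : ∀ x, ∑ i, c i x = 1 := by
    intro x
    have h1 : Matrix.diagonal (fun x => ∑ i, c i x) = (1 : Matrix (Fin d) (Fin d) ℂ) := by
      have h2 : ∑ i, M i = U * Matrix.diagonal (fun x => ∑ i, c i x) * Uᴴ := by
        rw [← hdsum]
        simp_rw [Finset.mul_sum, Finset.sum_mul]
        exact Finset.sum_congr rfl fun i _ => hc i
      have := hsand (Matrix.diagonal (fun x => ∑ i, c i x))
      rw [← h2, hsum] at this
      rw [← this]; rw [Matrix.mul_one, hUU]
    have := congrFun (congrFun h1 x) x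
    simpa using this
  set q : Fin n → Fin d → ℝ := fun i x => (c i x).re with hq
  have hcq : ∀ i x, c i x = (q i x : ℂ) := by
    intro i x
    exact Complex.eq_re_of_ofReal_le (r := 0) (by simpa using hcpos i x)
  have hqpos : ∀ i x, 0 ≤ q i x := fun i x => (Complex.nonneg_iff.mp (hcpos i x)).1
  have hqsum : ∀ x, ∑ i, q i x = 1 := by
    intro x
    have : ((∑ i, q i x : ℝ) : ℂ) = 1 := by
      push_cast
      rw [← hcsum x]
      exact Finset.sum_congr rfl fun i _ => (hcq i x).symm
    exact_mod_cast this
  -- the weights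
  set w : (Fin d → Fin n) → ℝ := fun f => ∏ x, q (f x) x with hw
  have hwpos : ∀ f, 0 ≤ w f := fun f => Finset.prod_nonneg fun x _ => hqpos _ _
  have hwsum : ∑ f : Fin d → Fin n, w f = 1 := by
    rw [← Fintype.prod_sum (fun (x : Fin d) (i : Fin n) => q i x)]
    simp [hqsum]
  -- key combinatorial identity
  have hkey : ∀ i x, ∑ f : Fin d → Fin n, w f * (if f x = i then (1:ℝ) else 0) = q i x := by
    intro i x
    have h1 := Fintype.prod_sum
      (fun (y : Fin d) (j : Fin n) => if y = x then (if j = i then q j y else 0) else q j y)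
    have hL : ∏ y : Fin d, ∑ j : Fin n,
        (if y = x then (if j = i then q j y else 0) else q j y) = q i x := by
      rw [Finset.prod_eq_single x]
      · simp
      · intro y _ hy
        simp [hy, hqsum]
      · simp
    have hR : ∀ f : Fin d → Fin n, ∏ y : Fin d,
        (if y = x then (if f y = i then q (f y) y else 0) else q (f y) y)
        = w f * (if f x = i then (1:ℝ) else 0) := by
      intro f
      by_cases hfx : f x = i
      · simp only [hfx, if_pos, if_true, mul_one]
        refine Finset.prod_congr rfl fun y _ => ?_
        by_cases hy : y = x <;> simp [hy, hfx]
      · rw [if_neg hfx, mul_zero]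
        exact Finset.prod_eq_zero (Finset.mem_univ x) (by simp [hfx])
    rw [← hL, h1]
    exact Finset.sum_congr rfl fun f _ => (hR f).symm
  -- the projective measurements
  set D : (Fin d → Fin n) → Fin n → Matrix (Fin d) (Fin d) ℂ :=
    fun f i => Matrix.diagonal (fun x => if f x = i then (1:ℂ) else 0) with hDdef
  set P : (Fin d → Fin n) → Fin n → Matrix (Fin d) (Fin d) ℂ :=
    fun f i => U * D f i * Uᴴ with hPdef
  have hDherm : ∀ f i, (D f i)ᴴ = D f i := by
    intro f i
    simp only [hDdef, Matrix.diagonal_conjTranspose]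
    refine congrArg Matrix.diagonal ?_
    funext x
    by_cases h : f x = i <;> simp [h]
  have hproj : ∀ f, IsProjMeas d n (P f) := by
    intro f
    refine ⟨?_, ?_, ?_⟩
    · intro i
      simp only [hPdef, Matrix.conjTranspose_mul, Matrix.conjTranspose_conjTranspose,
        hDherm, Matrix.mul_assoc]
    · intro i j
      have : P f i * P f j = U * (D f i * D f j) * Uᴴ := by
        simp only [hPdef]
        calc (U * D f i * Uᴴ) * (U * D f j * Uᴴ)
            = U * D f i * (Uᴴ * U) * D f j * Uᴴ := by noncomm_ring
          _ = U * (D f i * D f j) * Uᴴ := by rw [hUU]; noncomm_ring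
      rw [this]
      by_cases hij : i = j
      · subst hij
        rw [if_pos rfl]
        have hDD : D f i * D f i = D f i := by
          simp only [hDdef, Matrix.diagonal_mul_diagonal]
          refine congrArg Matrix.diagonal (funext fun x => ?_)
          by_cases h : f x = i <;> simp [h]
        rw [hDD]
      · rw [if_neg hij]
        have hDD : D f i * D f j = 0 := by
          simp only [hDdef, Matrix.diagonal_mul_diagonal]
          have : (fun x => (if f x = i then (1:ℂ) else 0) * (if f x = j then (1:ℂ) else 0))
              = fun _ => (0:ℂ) := by
            funext x
            by_cases h : f x = i
            · have hj : f x ≠ j := h ▸ hij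
              simp [h, hj, hij]
            · simp [h]
          rw [this, Matrix.diagonal_zero]
        rw [hDD, Matrix.mul_zero, Matrix.zero_mul]
    · have hone : ∑ i, D f i = 1 := by
        simp only [hDdef]
        rw [hdsum]
        have : (fun x => ∑ i, if f x = i then (1:ℂ) else 0) = fun _ => (1:ℂ) := by
          funext x
          simp
        rw [this, Matrix.diagonal_one]
      simp only [hPdef]
      simp_rw [← Finset.sum_mul, ← Finset.mul_sum]
      rw [hone, Matrix.mul_one, hUU']
  -- the decomposition
  have hdecomp : ∀ i, M i = ∑ f : Fin d → Fin n, (w f : ℂ) • P f i := by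
    intro i
    have h1 : ∑ f : Fin d → Fin n, (w f : ℂ) • D f i = Matrix.diagonal (c i) := by
      ext a b
      simp only [Matrix.sum_apply, Matrix.smul_apply, hDdef, Matrix.diagonal_apply, smul_eq_mul]
      by_cases hab : a = b
      · subst hab
        simp only [if_pos rfl]
        have := hkey i a
        calc ∑ f : Fin d → Fin n, (w f : ℂ) * (if f a = i then (1:ℂ) else 0)
            = ((∑ f : Fin d → Fin n, w f * (if f a = i then (1:ℝ) else 0) : ℝ) : ℂ) := by
              push_cast
              refine Finset.sum_congr rfl fun f _ => ?_
              by_cases h : f a = i <;> simp [h]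
          _ = (q i a : ℂ) := by rw [this]
          _ = c i a := (hcq i a).symm
      · simp [hab]
    calc M i = U * Matrix.diagonal (c i) * Uᴴ := hc i
      _ = U * (∑ f : Fin d → Fin n, (w f : ℂ) • D f i) * Uᴴ := by rw [h1]
      _ = ∑ f : Fin d → Fin n, (w f : ℂ) • P f i := by
          simp only [hPdef, Finset.mul_sum, Finset.sum_mul, Matrix.mul_smul, Matrix.smul_mul]
  -- package via the equivalence with Fin (n ^ d)
  refine ⟨n ^ d, fun k => w (finFunctionFinEquiv.symm k), fun k => P (finFunctionFinEquiv.symm k),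
    fun k => hwpos _, ?_, fun k => hproj _, ?_⟩
  · rw [Equiv.sum_comp finFunctionFinEquiv.symm w]
    exact hwsum
  · intro i
    rw [Equiv.sum_comp finFunctionFinEquiv.symm (fun f => (w f : ℂ) • P f i)]
    exact hdecomp i
end
end

section
/- If M = (M_0,...,M_{n-1}) is a projectively simulable POVM with decomposition M_i = Σ_k p_k P_i^k, then the bipartite operators R_{ij} = Σ_k p_k (P_i^k ⊗ P_j^k) satisfy: (a) R_{ij} ≥ 0; (b) Σ_i R_{ij} = I ⊗ M_j; (c) Σ_j R_{ij} = M_i ⊗ I; (d) Tr_1(V R_{ij}) = 0 for i ≠ j, where V is the swap operator. -/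
open Matrix Kronecker BigOperators ComplexOrder

noncomputable section

/-- The swap operator `V = Σ_{a,b} |ab⟩⟨ba|` on `ℂ^d ⊗ ℂ^d`. -/
def swapOp (d : ℕ) : Matrix (Fin d × Fin d) (Fin d × Fin d) ℂ :=
  fun p q => if p.1 = q.2 ∧ p.2 = q.1 then 1 else 0

/-- Partial trace over the first tensor factor. -/
def ptrace1 (d : ℕ) (M : Matrix (Fin d × Fin d) (Fin d × Fin d) ℂ) :
    Matrix (Fin d) (Fin d) ℂ :=
  fun i j => ∑ k, M (k, i) (k, j)

lemma kron_conjT {d : ℕ} (A B : Matrix (Fin d) (Fin d) ℂ) :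
    (A ⊗ₖ B)ᴴ = Aᴴ ⊗ₖ Bᴴ := by
  ext ⟨a, b⟩ ⟨c, e⟩
  simp [conjTranspose_apply, kroneckerMap_apply, mul_comm]

lemma psd_sum {m : Type*} [Fintype m] [DecidableEq m] {ι : Type*} (s : Finset ι)
    (f : ι → Matrix m m ℂ) (h : ∀ i ∈ s, (f i).PosSemidef) :
    (∑ i ∈ s, f i).PosSemidef := by
  classical
  induction s using Finset.cons_induction with
  | empty => simpa using Matrix.PosSemidef.zero
  | cons a s ha ih =>
    rw [Finset.sum_cons]
    exact (h a (Finset.mem_cons_self a s)).add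
      (ih fun i hi => h i (Finset.mem_cons_of_mem hi))

lemma psd_smul {m : Type*} [Fintype m] {c : ℝ} (hc : 0 ≤ c)
    {A : Matrix m m ℂ} (hA : A.PosSemidef) : ((c : ℂ) • A).PosSemidef := by
  refine ⟨?_, fun x => ?_⟩
  · unfold Matrix.IsHermitian
    rw [conjTranspose_smul, hA.1.eq]
    simp
  · have h := mul_nonneg (show (0 : ℂ) ≤ (c : ℂ) by exact_mod_cast hc) (hA.2 x)
    convert h using 1
    simp only [Finsupp.sum, Finset.mul_sum, Matrix.smul_apply, smul_eq_mul]
    exact Finset.sum_congr rfl fun i _ => Finset.sum_congr rfl fun j _ => by ring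

lemma sum_kron {d : ℕ} {ι : Type*} (s : Finset ι)
    (A : ι → Matrix (Fin d) (Fin d) ℂ) (B : Matrix (Fin d) (Fin d) ℂ) :
    (∑ i ∈ s, A i) ⊗ₖ B = ∑ i ∈ s, A i ⊗ₖ B := by
  ext ⟨a, b⟩ ⟨c, e⟩
  simp [kroneckerMap_apply, Matrix.sum_apply, Finset.sum_mul]

lemma kron_sum {d : ℕ} {ι : Type*} (s : Finset ι)
    (A : Matrix (Fin d) (Fin d) ℂ) (B : ι → Matrix (Fin d) (Fin d) ℂ) :
    A ⊗ₖ (∑ i ∈ s, B i) = ∑ i ∈ s, A ⊗ₖ B i := by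
  ext ⟨a, b⟩ ⟨c, e⟩
  simp [kroneckerMap_apply, Matrix.sum_apply, Finset.mul_sum]

/-- For a projectively simulable POVM `M_i = Σ_k p_k P_i^k`, the bipartite operators
`R_{ij} = Σ_k p_k (P_i^k ⊗ P_j^k)` satisfy positivity, the marginal conditions,
and the swap constraint. -/
theorem simulable_R_matrix_constraints (d n N : ℕ)
    (p : Fin N → ℝ) (hp0 : ∀ k, 0 ≤ p k) (hp1 : ∑ k, p k = 1)
    (P : Fin N → Fin n → Matrix (Fin d) (Fin d) ℂ)
    (hP : ∀ k, IsProjMeas d n (P k))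
    (M : Fin n → Matrix (Fin d) (Fin d) ℂ)
    (hM : ∀ i, M i = ∑ k, (p k : ℂ) • P k i)
    (R : Fin n → Fin n → Matrix (Fin d × Fin d) (Fin d × Fin d) ℂ)
    (hR : ∀ i j, R i j = ∑ k, (p k : ℂ) • (P k i ⊗ₖ P k j)) :
    (∀ i j, (R i j).PosSemidef) ∧
    (∀ j, ∑ i, R i j = (1 : Matrix (Fin d) (Fin d) ℂ) ⊗ₖ M j) ∧
    (∀ i, ∑ j, R i j = M i ⊗ₖ (1 : Matrix (Fin d) (Fin d) ℂ)) ∧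
    (∀ i j, i ≠ j → ptrace1 d (swapOp d * R i j) = 0) := by
  refine ⟨?_, ?_, ?_, ?_⟩
  · -- positivity
    intro i j
    rw [hR]
    refine psd_sum _ _ fun k _ => psd_smul (hp0 k) ?_
    have hHi := (hP k).1 i
    have hHj := (hP k).1 j
    have hQ : (P k i ⊗ₖ P k j)ᴴ * (P k i ⊗ₖ P k j) = P k i ⊗ₖ P k j := by
      rw [kron_conjT, hHi, hHj, ← mul_kronecker_mul]
      have h1 := (hP k).2.1 i i
      have h2 := (hP k).2.1 j j
      simp only [if_pos] at h1 h2
      rw [h1, h2]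
    exact hQ ▸ posSemidef_conjTranspose_mul_self _
  · -- first marginal
    intro j
    calc ∑ i, R i j = ∑ k, (p k : ℂ) • ((∑ i, P k i) ⊗ₖ P k j) := by
          simp_rw [hR, sum_kron, Finset.smul_sum]
          rw [Finset.sum_comm]
        _ = (1 : Matrix (Fin d) (Fin d) ℂ) ⊗ₖ M j := by
          rw [hM, kron_sum]
          refine Finset.sum_congr rfl fun k _ => ?_
          rw [(hP k).2.2, kronecker_smul]
  · -- second marginal
    intro i
    calc ∑ j, R i j = ∑ k, (p k : ℂ) • (P k i ⊗ₖ (∑ j, P k j)) := by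
          simp_rw [hR, kron_sum, Finset.smul_sum]
          rw [Finset.sum_comm]
        _ = M i ⊗ₖ (1 : Matrix (Fin d) (Fin d) ℂ) := by
          rw [hM, sum_kron]
          refine Finset.sum_congr rfl fun k _ => ?_
          rw [(hP k).2.2, smul_kronecker]
  · -- swap constraint
    intro i j hij
    ext a b
    have key : ∀ k : Fin d, (swapOp d * R i j) (k, a) (k, b) = R i j (a, k) (k, b) := by
      intro k
      rw [mul_apply]
      rw [Fintype.sum_eq_single ((a, k) : Fin d × Fin d)]
      · simp [swapOp]
      · rintro ⟨x, y⟩ hxy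
        simp only [swapOp]
        rw [if_neg, zero_mul]
        rintro ⟨h1, h2⟩
        exact hxy (by simp [← h1, ← h2])
    show ∑ k, (swapOp d * R i j) (k, a) (k, b) = 0
    simp_rw [key, hR]
    simp only [Matrix.sum_apply, Matrix.smul_apply, kroneckerMap_apply, smul_eq_mul]
    rw [Finset.sum_comm]
    have : ∀ m : Fin N, ∑ k, (p m : ℂ) * (P m i (a, k).1 (k, b).1 * P m j (a, k).2 (k, b).2) = 0 := by
      intro m
      have h0 : P m i * P m j = 0 := by rw [(hP m).2.1 i j, if_neg hij]
      have := congrFun (congrFun h0 a) b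
      rw [mul_apply] at this
      simp only [Matrix.zero_apply] at this
      simp only []
      rw [← Finset.mul_sum, this, mul_zero]
    simp_rw [this]
    simp
end
end
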